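/- For every n ∈ ℙ, ∑_{β ∈ B_n} (-1)^{ℓ_B(β)} q^{fmaj(β)} = (1 + (-q)^n) · ∑_{γ ∈ Δ_n} (-1)^{ℓ_B(γ)} q^{Dmaj(γ)}. -/

import Mathlib

open Finset Polynomial

/-- The hyperoctahedral group `B n`, modeled as pairs (permutation, sign vector):
the signed permutation with window `β(i) = ±(σ(i)+1)`. -/
abbrev Bgrp (n : ℕ) := Equiv.Perm (Fin n) × (Fin n → Bool)

/-- The window entry `β(i)` (a nonzero integer). -/
def wdw {n : ℕ} (β : Bgrp n) (i : Fin n) : ℤ :=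
  (if β.2 i then -1 else 1) * ((β.1 i : ℤ) + 1)

/-- Window entry at a `ℕ` position (0-based), `0` out of range. -/
def wdwN {n : ℕ} (β : Bgrp n) (i : ℕ) : ℤ :=
  if h : i < n then wdw β ⟨i, h⟩ else 0

/-- Number of inversions of the window. -/
def invB {n : ℕ} (β : Bgrp n) : ℕ :=
  ((univ : Finset (Fin n × Fin n)).filter
    (fun p => p.1 < p.2 ∧ wdw β p.2 < wdw β p.1)).card

/-- The set of positions with negative entries. -/
def NegB {n : ℕ} (β : Bgrp n) : Finset (Fin n) :=
  univ.filter (fun i => wdw β i < 0)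

def N1 {n : ℕ} (β : Bgrp n) : ℕ := (NegB β).card

def N2 {n : ℕ} (β : Bgrp n) : ℕ :=
  ((univ : Finset (Fin n × Fin n)).filter
    (fun p => p.1 < p.2 ∧ wdw β p.1 + wdw β p.2 < 0)).card

/-- The order `-1 ≺ -2 ≺ ⋯ ≺ -n ≺ 1 ≺ 2 ≺ ⋯ ≺ n` on nonzero integers. -/
def precLt (a b : ℤ) : Prop :=
  (a < 0 ∧ b < 0 ∧ b < a) ∨ (a < 0 ∧ 0 < b) ∨ (0 < a ∧ 0 < b ∧ a < b)

instance (a b : ℤ) : Decidable (precLt a b) := by unfold precLt; infer_instance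

/-- Descent set of the window, with respect to `≺` (0-based positions). -/
def DesB {n : ℕ} (β : Bgrp n) : Finset ℕ :=
  (range (n-1)).filter (fun i => precLt (wdwN β (i+1)) (wdwN β i))

/-- Major index: sum of the (1-based) descent positions. -/
def majB {n : ℕ} (β : Bgrp n) : ℕ := ∑ i ∈ DesB β, (i+1)

/-- Flag-major index. -/
def fmaj {n : ℕ} (β : Bgrp n) : ℕ := 2 * majB β + N1 β

/-- Group multiplication (composition of signed permutations). -/
def bmul {n : ℕ} (β γ : Bgrp n) : Bgrp n :=
  (β.1 * γ.1, fun i => xor (γ.2 i) (β.2 (γ.1 i)))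

/-- The identity signed permutation. -/
def bone (n : ℕ) : Bgrp n := (1, fun _ => false)

/-- The Coxeter generators `s_0, s_1, …, s_{n-1}` of `B n`. -/
def BGens (n : ℕ) : Set (Bgrp n) :=
  { b | (∃ h : 0 < n, b = ((1 : Equiv.Perm (Fin n)), fun j => decide (j = (⟨0, h⟩ : Fin n)))) ∨
        (∃ (i : ℕ) (h : i + 1 < n),
          b = (Equiv.swap ⟨i, Nat.lt_of_succ_lt h⟩ ⟨i+1, h⟩, fun _ => false)) }

/-- Minimal length of an expression of `β` as a product of the generators of `B n`. -/
noncomputable def lenB {n : ℕ} (β : Bgrp n) : ℕ :=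
  sInf {k | ∃ l : List (Bgrp n), l.length = k ∧ (∀ g ∈ l, g ∈ BGens n) ∧
    l.foldr bmul (bone n) = β}

/-- The Coxeter generators `s_0^D, s_1, …, s_{n-1}` of `D n`. -/
def DGens (n : ℕ) : Set (Bgrp n) :=
  { b | (∃ h : 1 < n,
          b = (Equiv.swap ⟨0, Nat.lt_of_succ_lt h⟩ ⟨1, h⟩, fun (j : Fin n) => decide ((j : ℕ) < 2))) ∨
        (∃ (i : ℕ) (h : i + 1 < n),
          b = (Equiv.swap ⟨i, Nat.lt_of_succ_lt h⟩ ⟨i+1, h⟩, fun _ => false)) }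

/-- Minimal length of an expression as a product of the generators of `D n`. -/
noncomputable def lenD {n : ℕ} (β : Bgrp n) : ℕ :=
  sInf {k | ∃ l : List (Bgrp n), l.length = k ∧ (∀ g ∈ l, g ∈ DGens n) ∧
    l.foldr bmul (bone n) = β}

/-- The even-signed permutation group `D n` as a finset of `B n`. -/
def Dgrp (n : ℕ) : Finset (Bgrp n) := univ.filter (fun γ => Even (N1 γ))

/-- `Δ_n = {γ ∈ B_n : γ(n) > 0}`. -/
def DeltaSet (n : ℕ) : Finset (Bgrp n) := univ.filter (fun γ => 0 < wdwN γ (n-1))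

/-- `|γ|_n`: replace the last window entry by its absolute value. -/
def absLast {n : ℕ} (γ : Bgrp n) : Bgrp n :=
  (γ.1, fun i => if (i : ℕ) = n - 1 then false else γ.2 i)

/-- The `D`-major index. -/
def Dmaj {n : ℕ} (γ : Bgrp n) : ℕ := fmaj (absLast γ)

/-- `-β`: negate all window entries. -/
def negB {n : ℕ} (β : Bgrp n) : Bgrp n := (β.1, fun i => !β.2 i)

/-- Number of inversions of a permutation of `Fin n`. -/
def invS {n : ℕ} (σ : Equiv.Perm (Fin n)) : ℕ :=
  ((univ : Finset (Fin n × Fin n)).filter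
    (fun p => p.1 < p.2 ∧ σ p.2 < σ p.1)).card

/-- Major index of a permutation of `Fin n` (usual order). -/
def majS {n : ℕ} (σ : Equiv.Perm (Fin n)) : ℕ :=
  ∑ i ∈ (range (n-1)).filter
      (fun i => ∀ h : i + 1 < n, σ ⟨i+1, h⟩ < σ ⟨i, Nat.lt_of_succ_lt h⟩), (i+1)

/-- The `q`-analogue `[m]_q = 1 + q + ⋯ + q^{m-1}`, evaluated at a polynomial `q`. -/
noncomputable def qpoly (m : ℕ) (q : Polynomial ℤ) : Polynomial ℤ := ∑ k ∈ range m, q ^ k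

/-! ### Auxiliary lemmas -/

section Aux

variable {n : ℕ}

lemma wdw_neg_iff (β : Bgrp n) (i : Fin n) : wdw β i < 0 ↔ β.2 i = true := by
  have h0 : (0:ℤ) < (β.1 i : ℤ) + 1 := by positivity
  cases hb : β.2 i <;> simp [wdw, hb] <;> omega

lemma wdw_ne_zero (β : Bgrp n) (i : Fin n) : wdw β i ≠ 0 := by
  have h0 : (0:ℤ) < (β.1 i : ℤ) + 1 := by positivity
  cases hb : β.2 i <;> simp [wdw, hb] <;> omega

lemma wdwN_ne_zero (β : Bgrp n) {i : ℕ} (h : i < n) : wdwN β i ≠ 0 := by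
  rw [wdwN, dif_pos h]; exact wdw_ne_zero β _

/-- The sign character of `B n`. -/
def epsZ (β : Bgrp n) : ℤ := (Equiv.Perm.sign β.1 : ℤ) * (-1) ^ (N1 β)

lemma N1_eq_card (β : Bgrp n) : N1 β = (univ.filter (fun i => β.2 i = true)).card := by
  unfold N1 NegB
  congr 1
  apply Finset.filter_congr
  intro i _
  simp [wdw_neg_iff]

lemma neg_one_pow_N1 (β : Bgrp n) :
    ((-1:ℤ)) ^ (N1 β) = ∏ i, (if β.2 i = true then (-1:ℤ) else 1) := by
  rw [N1_eq_card, Finset.prod_ite, Finset.prod_const, Finset.prod_const, one_pow, mul_one]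

lemma epsZ_bmul (β γ : Bgrp n) : epsZ (bmul β γ) = epsZ β * epsZ γ := by
  unfold epsZ bmul
  simp only [neg_one_pow_N1]
  rw [map_mul]
  push_cast
  have key : ∀ i, (if (xor (γ.2 i) (β.2 (γ.1 i))) = true then (-1:ℤ) else 1)
      = (if γ.2 i = true then (-1:ℤ) else 1) * (if β.2 (γ.1 i) = true then (-1:ℤ) else 1) := by
    intro i; cases γ.2 i <;> cases β.2 (γ.1 i) <;> simp
  calc (Equiv.Perm.sign β.1 : ℤ) * (Equiv.Perm.sign γ.1 : ℤ) *
        ∏ i, (if (xor (γ.2 i) (β.2 (γ.1 i))) = true then (-1:ℤ) else 1)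
      = (Equiv.Perm.sign β.1 : ℤ) * (Equiv.Perm.sign γ.1 : ℤ) *
        ((∏ i, (if γ.2 i = true then (-1:ℤ) else 1)) *
         (∏ i, (if β.2 (γ.1 i) = true then (-1:ℤ) else 1))) := by
        rw [← Finset.prod_mul_distrib]; simp_rw [key]
    _ = (Equiv.Perm.sign β.1 : ℤ) * (Equiv.Perm.sign γ.1 : ℤ) *
        ((∏ i, (if γ.2 i = true then (-1:ℤ) else 1)) *
         (∏ i, (if β.2 i = true then (-1:ℤ) else 1))) := by
        rw [Equiv.prod_comp γ.1 (fun j => if β.2 j = true then (-1:ℤ) else 1)]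
    _ = _ := by ring

lemma epsZ_bone : epsZ (bone n) = 1 := by
  unfold epsZ bone
  simp [N1_eq_card]

lemma epsZ_gen {g : Bgrp n} (hg : g ∈ BGens n) : epsZ g = -1 := by
  rcases hg with ⟨h, rfl⟩ | ⟨i, h, rfl⟩
  · unfold epsZ
    rw [N1_eq_card]
    have : (univ.filter (fun j : Fin n => j = (⟨0, h⟩ : Fin n))) = {(⟨0, h⟩ : Fin n)} := by
      ext j; simp
    simp [this]
  · unfold epsZ
    have hne : (⟨i, Nat.lt_of_succ_lt h⟩ : Fin n) ≠ ⟨i+1, h⟩ := by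
      simp [Fin.ext_iff]
    rw [N1_eq_card]
    simp [Equiv.Perm.sign_swap hne]

lemma epsZ_foldr (l : List (Bgrp n)) (hl : ∀ g ∈ l, g ∈ BGens n) :
    epsZ (l.foldr bmul (bone n)) = (-1) ^ l.length := by
  induction l with
  | nil => simpa using epsZ_bone
  | cons g t ih =>
      simp only [List.foldr_cons, List.length_cons]
      rw [epsZ_bmul, epsZ_gen (hl g (by simp)), ih (fun x hx => hl x (by simp [hx]))]
      ring

end Aux

section Gen

variable {n : ℕ}

lemma bmul_bone (β : Bgrp n) : bmul β (bone n) = β := by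
  unfold bmul bone
  refine Prod.ext (mul_one _) ?_
  funext i
  simp

lemma bone_bmul (β : Bgrp n) : bmul (bone n) β = β := by
  unfold bmul bone
  refine Prod.ext (one_mul _) ?_
  funext i
  simp

lemma bmul_assoc (α β γ : Bgrp n) : bmul (bmul α β) γ = bmul α (bmul β γ) := by
  unfold bmul
  refine Prod.ext (mul_assoc _ _ _) ?_
  funext i
  simp [Bool.xor_assoc]

/-- `β` is a product of a list of generators. -/
def genProd (β : Bgrp n) : Prop :=
  ∃ l : List (Bgrp n), (∀ g ∈ l, g ∈ BGens n) ∧ l.foldr bmul (bone n) = β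

lemma foldr_bmul_eq (l : List (Bgrp n)) (x : Bgrp n) :
    l.foldr bmul x = bmul (l.foldr bmul (bone n)) x := by
  induction l with
  | nil => simp [bone_bmul]
  | cons g t ih => simp only [List.foldr_cons, ih, bmul_assoc]

lemma genProd_bmul {β γ : Bgrp n} (hβ : genProd β) (hγ : genProd γ) : genProd (bmul β γ) := by
  obtain ⟨l1, hl1, hf1⟩ := hβ
  obtain ⟨l2, hl2, hf2⟩ := hγ
  refine ⟨l1 ++ l2, ?_, ?_⟩
  · intro g hg; rcases List.mem_append.1 hg with h | h
    · exact hl1 g h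
    · exact hl2 g h
  · rw [List.foldr_append, foldr_bmul_eq, hf1, hf2]

lemma genProd_gen {g : Bgrp n} (hg : g ∈ BGens n) : genProd g :=
  ⟨[g], by simpa using hg, by simp [bmul_bone]⟩

lemma genProd_one : genProd (bone n) := ⟨[], by simp, rfl⟩

lemma genProd_perm (hn : 0 < n) (σ : Equiv.Perm (Fin n)) :
    genProd ((σ, fun _ => false) : Bgrp n) := by
  obtain ⟨m, rfl⟩ : ∃ m, n = m + 1 := ⟨n - 1, (Nat.succ_pred_eq_of_pos hn).symm⟩
  have hσ : σ ∈ Submonoid.closure (Set.range fun i : Fin m => Equiv.swap i.castSucc i.succ) := by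
    rw [Equiv.Perm.mclosure_swap_castSucc_succ m]; trivial
  induction hσ using Submonoid.closure_induction with
  | mem x hx =>
      obtain ⟨i, rfl⟩ := hx
      apply genProd_gen
      right
      refine ⟨(i : ℕ), by omega, ?_⟩
      congr 1
  | one => exact genProd_one
  | mul x y hx hy ihx ihy =>
      have : ((x * y, fun _ => false) : Bgrp (m+1))
          = bmul (x, fun _ => false) (y, fun _ => false) := by
        unfold bmul; exact Prod.ext rfl (by funext i; simp)
      rw [this]; exact genProd_bmul ihx ihy

lemma genProd_delta (hn : 0 < n) (a : Fin n) :
    genProd ((1, fun i => decide (i = a)) : Bgrp n) := by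
  set z : Fin n := ⟨0, hn⟩ with hz
  have hs0 : ((1 : Equiv.Perm (Fin n)), fun j => decide (j = z)) ∈ BGens n := Or.inl ⟨hn, rfl⟩
  have h1 : bmul ((Equiv.swap z a, fun _ => false) : Bgrp n)
      ((1 : Equiv.Perm (Fin n)), fun j => decide (j = z))
      = (Equiv.swap z a, fun i => decide (i = z)) := by
    unfold bmul
    refine Prod.ext (mul_one _) ?_
    funext i
    simp
  have h2 : bmul ((Equiv.swap z a, fun i => decide (i = z)) : Bgrp n)
      ((Equiv.swap z a, fun _ => false) : Bgrp n)
      = ((1 : Equiv.Perm (Fin n)), fun i => decide (i = a)) := by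
    unfold bmul
    refine Prod.ext (Equiv.swap_mul_self _ _) ?_
    funext i
    have hiff : Equiv.swap z a i = z ↔ i = a :=
      (Equiv.swap z a).injective.eq_iff' (Equiv.swap_apply_right z a)
    simp [hiff]
  rw [← h2, ← h1]
  exact genProd_bmul (genProd_bmul (genProd_perm hn _) (genProd_gen hs0)) (genProd_perm hn _)

lemma genProd_signs (hn : 0 < n) (s : Fin n → Bool) :
    genProd ((1, s) : Bgrp n) := by
  suffices h : ∀ t : Finset (Fin n), genProd ((1, fun i => decide (i ∈ t)) : Bgrp n) by
    have h2 := h (univ.filter (fun i => s i = true))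
    have : (fun i => decide (i ∈ univ.filter (fun i => s i = true))) = s := by
      funext i; cases hs : s i <;> simp [hs]
    rwa [this] at h2
  intro t
  induction t using Finset.induction with
  | empty => have : (fun i : Fin n => decide (i ∈ (∅ : Finset (Fin n)))) = fun _ => false := by
                funext i; simp
             rw [this]; exact genProd_one
  | @insert a t ha ih =>
      have : ((1, fun i => decide (i ∈ insert a t)) : Bgrp n)
          = bmul (1, fun i => decide (i = a)) (1, fun i => decide (i ∈ t)) := by
        unfold bmul
        refine Prod.ext (one_mul _).symm ?_
        funext i
        by_cases hia : i = a
        · subst hia; simp [ha]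
        · simp [Finset.mem_insert, hia]
      rw [this]
      exact genProd_bmul (genProd_delta hn a) ih

lemma genProd_all (hn : 0 < n) (β : Bgrp n) : genProd β := by
  have : β = bmul (β.1, fun _ => false) (1, β.2) := by
    unfold bmul
    refine Prod.ext (mul_one _).symm ?_
    funext i
    simp
  rw [this]
  exact genProd_bmul (genProd_perm hn _) (genProd_signs hn _)

lemma neg_one_pow_lenB (hn : 0 < n) (β : Bgrp n) : ((-1:ℤ)) ^ (lenB β) = epsZ β := by
  have hne : {k | ∃ l : List (Bgrp n), l.length = k ∧ (∀ g ∈ l, g ∈ BGens n) ∧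
      l.foldr bmul (bone n) = β}.Nonempty := by
    obtain ⟨l, hl, hf⟩ := genProd_all hn β
    exact ⟨l.length, l, rfl, hl, hf⟩
  obtain ⟨l, hlen, hgens, hfold⟩ : lenB β ∈ {k | ∃ l : List (Bgrp n), l.length = k ∧
      (∀ g ∈ l, g ∈ BGens n) ∧ l.foldr bmul (bone n) = β} := Nat.sInf_mem hne
  rw [← hlen, ← epsZ_foldr l hgens, hfold]

end Gen

section NegBij

variable {n : ℕ}

lemma negB_negB (β : Bgrp n) : negB (negB β) = β := by
  unfold negB
  exact Prod.ext rfl (by funext i; simp)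

lemma wdw_negB (β : Bgrp n) (i : Fin n) : wdw (negB β) i = - wdw β i := by
  unfold wdw negB
  cases hb : β.2 i <;> simp [hb]

lemma wdwN_negB (β : Bgrp n) (i : ℕ) : wdwN (negB β) i = - wdwN β i := by
  unfold wdwN
  split
  · exact wdw_negB β _
  · simp

lemma N1_add_negB (β : Bgrp n) : N1 (negB β) + N1 β = n := by
  unfold N1 NegB
  have h1 : (univ.filter (fun i => wdw (negB β) i < 0))
      = univ.filter (fun i => ¬ wdw β i < 0) := by
    apply Finset.filter_congr
    intro i _
    have h2 := wdw_ne_zero β i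
    rw [wdw_negB]
    constructor <;> intro h <;> omega
  rw [h1, add_comm, Finset.card_filter_add_card_filter_not]
  simp

lemma key_ind (u v : ℤ) (hu : u ≠ 0) (hv : v ≠ 0) :
    ((if precLt (-v) (-u) then 1 else 0) : ℕ) + (if v < 0 then 1 else 0)
      = (if precLt v u then 1 else 0) + (if u < 0 then 1 else 0) := by
  split_ifs <;> simp only [precLt] at * <;> omega

lemma majB_negB (β : Bgrp n) (hn : 0 < n) (hlast : ¬ wdwN β (n-1) < 0) :
    majB (negB β) = majB β + N1 β := by
  set c : ℕ → ℕ := fun j => if wdwN β j < 0 then 1 else 0 with hc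
  have hmaj : ∀ γ : Bgrp n, majB γ = ∑ i ∈ range (n-1),
      (i+1) * (if precLt (wdwN γ (i+1)) (wdwN γ i) then 1 else 0) := by
    intro γ
    unfold majB DesB
    rw [Finset.sum_filter]
    exact Finset.sum_congr rfl (fun i _ => by split_ifs <;> simp)
  have step : ∀ i ∈ range (n-1),
      (i+1) * (if precLt (wdwN (negB β) (i+1)) (wdwN (negB β) i) then 1 else 0) + (i+1) * c (i+1)
      = (i+1) * (if precLt (wdwN β (i+1)) (wdwN β i) then 1 else 0) + (i+1) * c i := by
    intro i hi
    have hin : i < n - 1 := Finset.mem_range.1 hi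
    have hu : wdwN β i ≠ 0 := wdwN_ne_zero β (by omega)
    have hv : wdwN β (i+1) ≠ 0 := wdwN_ne_zero β (by omega)
    rw [wdwN_negB, wdwN_negB, ← Nat.mul_add, ← Nat.mul_add]
    congr 1
    exact key_ind (wdwN β i) (wdwN β (i+1)) hu hv
  have hsum : majB (negB β) + ∑ i ∈ range (n-1), (i+1) * c (i+1)
      = majB β + ∑ i ∈ range (n-1), (i+1) * c i := by
    rw [hmaj (negB β), hmaj β, ← Finset.sum_add_distrib, ← Finset.sum_add_distrib]
    exact Finset.sum_congr rfl step
  have hclast : c (n-1) = 0 := by simp [hc, hlast]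
  have hA : ∑ i ∈ range (n-1), (i+1) * c (i+1) = ∑ i ∈ range (n-1), i * c i := by
    have h1 : ∑ i ∈ range ((n-1)+1), i * c i
        = (∑ i ∈ range (n-1), (i+1) * c (i+1)) + 0 * c 0 := Finset.sum_range_succ' _ _
    have h2 : ∑ i ∈ range ((n-1)+1), i * c i
        = (∑ i ∈ range (n-1), i * c i) + (n-1) * c (n-1) := Finset.sum_range_succ _ _
    rw [h1, hclast] at h2
    omega
  have hB : ∑ i ∈ range (n-1), (i+1) * c i
      = (∑ i ∈ range (n-1), i * c i) + ∑ i ∈ range (n-1), c i := by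
    rw [← Finset.sum_add_distrib]
    exact Finset.sum_congr rfl (fun i _ => by ring)
  have hN : N1 β = ∑ i ∈ range (n-1), c i := by
    have h1 : N1 β = ∑ i : Fin n, if wdw β i < 0 then 1 else 0 := by
      unfold N1 NegB
      rw [Finset.card_filter]
    have h2 : ∀ i : Fin n, (if wdw β i < 0 then 1 else 0) = c (i : ℕ) := by
      intro i
      simp only [hc, wdwN, i.isLt, dif_pos, Fin.eta]
    rw [h1]
    simp_rw [h2]
    rw [Fin.sum_univ_eq_sum_range (fun j => c j) n]
    have h3 : ∑ i ∈ range ((n-1)+1), c i = (∑ i ∈ range (n-1), c i) + c (n-1) :=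
      Finset.sum_range_succ _ _
    have hn' : (n-1)+1 = n := by omega
    rw [hn'] at h3
    rw [h3, hclast, Nat.add_zero]
  omega

lemma fmaj_negB (β : Bgrp n) (hn : 0 < n) (hlast : ¬ wdwN β (n-1) < 0) :
    fmaj (negB β) = fmaj β + n := by
  unfold fmaj
  rw [majB_negB β hn hlast]
  have := N1_add_negB β
  omega

lemma epsZ_negB (β : Bgrp n) : epsZ (negB β) = (-1) ^ n * epsZ β := by
  unfold epsZ
  have h1 : (negB β).1 = β.1 := rfl
  have h2 : ((-1:ℤ)) ^ (N1 (negB β)) * (-1) ^ (N1 β) = (-1) ^ n := by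
    rw [← pow_add, N1_add_negB]
  have h3 : ((-1:ℤ)) ^ (N1 β) * (-1) ^ (N1 β) = 1 := by
    rw [← pow_add]
    exact Even.neg_one_pow ⟨N1 β, by ring⟩
  have h4 : ((-1:ℤ)) ^ (N1 (negB β)) = (-1) ^ n * (-1) ^ (N1 β) := by
    calc ((-1:ℤ)) ^ (N1 (negB β))
        = (-1) ^ (N1 (negB β)) * ((-1) ^ (N1 β) * (-1) ^ (N1 β)) := by rw [h3, mul_one]
      _ = ((-1) ^ (N1 (negB β)) * (-1) ^ (N1 β)) * (-1) ^ (N1 β) := by ring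
      _ = (-1) ^ n * (-1) ^ (N1 β) := by rw [h2]
  rw [h1, h4]
  ring

end NegBij

section Main

variable {n : ℕ}

lemma wdwN_last_pos_of_not_neg (β : Bgrp n) (hn : 0 < n) (h : ¬ 0 < wdwN β (n-1)) :
    wdwN β (n-1) < 0 := by
  have := wdwN_ne_zero β (show n - 1 < n by omega)
  omega

lemma Dmaj_eq_fmaj (γ : Bgrp n) (hn : 0 < n) (hγ : 0 < wdwN γ (n-1)) : Dmaj γ = fmaj γ := by
  have hm : n - 1 < n := by omega
  have hsign : γ.2 ⟨n-1, hm⟩ = false := by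
    rw [wdwN, dif_pos hm] at hγ
    cases hb : γ.2 ⟨n-1, hm⟩
    · rfl
    · have hlt := (wdw_neg_iff γ ⟨n-1, hm⟩).2 hb
      omega
  unfold Dmaj
  congr 1
  unfold absLast
  refine Prod.ext rfl ?_
  funext i
  show (if (i : ℕ) = n - 1 then false else γ.2 i) = γ.2 i
  by_cases hi : (i : ℕ) = n - 1
  · have hieq : i = ⟨n-1, hm⟩ := Fin.ext hi
    rw [if_pos hi, hieq, hsign]
  · rw [if_neg hi]

end Main


/-- `∑_{β ∈ B_n} (-1)^{ℓ_B β} q^{fmaj β} = (1 + (-q)^n) ∑_{γ ∈ Δ_n} (-1)^{ℓ_B γ} q^{Dmaj γ}`. -/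
theorem stmt17 (n : ℕ) (hn : 0 < n) :
    ∑ β : Bgrp n, (-1 : Polynomial ℤ) ^ lenB β * X ^ fmaj β =
      (1 + (-X : Polynomial ℤ) ^ n) *
        ∑ γ ∈ DeltaSet n, (-1 : Polynomial ℤ) ^ lenB γ * X ^ Dmaj γ := by
  have hlenC : ∀ β : Bgrp n, ((-1 : Polynomial ℤ)) ^ lenB β = C (epsZ β) := by
    intro β
    rw [← neg_one_pow_lenB hn β, map_pow, map_neg, map_one]
  have hsplit := Finset.sum_filter_add_sum_filter_not (univ : Finset (Bgrp n))
      (fun γ => 0 < wdwN γ (n-1)) (fun β => (-1 : Polynomial ℤ) ^ lenB β * X ^ fmaj β)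
  have hDelta : Finset.filter (fun γ : Bgrp n => 0 < wdwN γ (n-1)) univ = DeltaSet n := rfl
  have hneg : ∑ β ∈ Finset.filter (fun γ : Bgrp n => ¬ 0 < wdwN γ (n-1)) univ,
        ((-1 : Polynomial ℤ) ^ lenB β * X ^ fmaj β)
      = ∑ γ ∈ DeltaSet n,
          (-X : Polynomial ℤ) ^ n * ((-1 : Polynomial ℤ) ^ lenB γ * X ^ fmaj γ) := by
    refine Finset.sum_bij' (fun β _ => negB β) (fun γ _ => negB γ) ?_ ?_ ?_ ?_ ?_
    · intro β hβ
      rw [Finset.mem_filter] at hβ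
      rw [← hDelta, Finset.mem_filter]
      refine ⟨Finset.mem_univ _, ?_⟩
      have h2 := wdwN_last_pos_of_not_neg β hn hβ.2
      rw [wdwN_negB]
      omega
    · intro γ hγ
      rw [← hDelta, Finset.mem_filter] at hγ
      rw [Finset.mem_filter]
      refine ⟨Finset.mem_univ _, ?_⟩
      rw [wdwN_negB]
      omega
    · intro β _; exact negB_negB β
    · intro γ _; exact negB_negB γ
    · intro β hβ
      rw [Finset.mem_filter] at hβ
      have hβneg := wdwN_last_pos_of_not_neg β hn hβ.2
      set γ := negB β with hγdef
      have hβeq : β = negB γ := (negB_negB β).symm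
      have hγpos : ¬ wdwN γ (n-1) < 0 := by
        rw [hγdef, wdwN_negB]; omega
      have hfm : fmaj β = fmaj γ + n := by
        rw [hβeq]; exact fmaj_negB γ hn hγpos
      have heps : epsZ β = (-1) ^ n * epsZ γ := by
        rw [hβeq]; exact epsZ_negB γ
      rw [hlenC, hlenC, hfm, heps]
      rw [map_mul, map_pow, map_neg, map_one]
      rw [neg_pow (X : Polynomial ℤ) n, pow_add]
      ring
  have hDmajsum : ∀ F : ℕ → Polynomial ℤ, ∑ γ ∈ DeltaSet n, (-1 : Polynomial ℤ) ^ lenB γ * F (fmaj γ)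
      = ∑ γ ∈ DeltaSet n, (-1 : Polynomial ℤ) ^ lenB γ * F (Dmaj γ) := by
    intro F
    refine Finset.sum_congr rfl (fun γ hγ => ?_)
    rw [DeltaSet, Finset.mem_filter] at hγ
    rw [Dmaj_eq_fmaj γ hn hγ.2]
  calc ∑ β : Bgrp n, (-1 : Polynomial ℤ) ^ lenB β * X ^ fmaj β
      = (∑ γ ∈ DeltaSet n, (-1 : Polynomial ℤ) ^ lenB γ * X ^ fmaj γ)
        + ∑ β ∈ Finset.filter (fun γ : Bgrp n => ¬ 0 < wdwN γ (n-1)) univ,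
            ((-1 : Polynomial ℤ) ^ lenB β * X ^ fmaj β) := by
        rw [← hsplit, hDelta]
    _ = (∑ γ ∈ DeltaSet n, (-1 : Polynomial ℤ) ^ lenB γ * X ^ fmaj γ)
        + (-X : Polynomial ℤ) ^ n * ∑ γ ∈ DeltaSet n, (-1 : Polynomial ℤ) ^ lenB γ * X ^ fmaj γ := by
        rw [hneg, Finset.mul_sum]
    _ = (∑ γ ∈ DeltaSet n, (-1 : Polynomial ℤ) ^ lenB γ * X ^ Dmaj γ)
        + (-X : Polynomial ℤ) ^ n * ∑ γ ∈ DeltaSet n, (-1 : Polynomial ℤ) ^ lenB γ * X ^ Dmaj γ := by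
        rw [hDmajsum (fun m => X ^ m)]
    _ = (1 + (-X : Polynomial ℤ) ^ n) *
          ∑ γ ∈ DeltaSet n, (-1 : Polynomial ℤ) ^ lenB γ * X ^ Dmaj γ := by ring
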